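/- Under Assumption B1, let U_K, U_Q ∈ ℝ^{d×d} be orthogonal matrices whose columns satisfy x_{i,opt(i)}/‖x_{i,opt(i)}‖_2 = u^k_{π(i)} and z_i/‖z_i‖_2 = u^q_{π(i)} for all i ∈ [n] for some injective π : [n] → [d]. For β ∈ ℝ^d define W := U_K Diag(β) U_Q^⊤ and B̃_{il} := sign(⟨x_{i,opt(i)}, z_i⟩)·⟨x_{i,opt(i)} − x_{il}, z_i⟩·e_{π(i)} ∈ ℝ^d. Then for every β ∈ ℝ^d, every i ∈ [n] and every l ≠ opt(i): β^⊤ B̃_{il} = (x_{i,opt(i)} − x_{il})^⊤ W z_i. In particular, β is feasible for the rotated ℓ1-SVM (β^⊤ B̃_{il} ≥ 1 for all constraints) if and only if W is feasible for the attention SVM ((x_{i,opt(i)} − x_{il})^⊤ W z_i ≥ 1 for all constraints). -/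

import Mathlib

open Real Filter Finset

noncomputable section

namespace AttnGF

/-- Softmax of a vector in `ℝ^L`. -/
def S {L : ℕ} (u : Fin L → ℝ) (l : Fin L) : ℝ := Real.exp (u l) / ∑ j, Real.exp (u j)

/-- Euclidean norm of a vector. -/
def l2 {d : ℕ} (x : Fin d → ℝ) : ℝ := Real.sqrt (∑ j, x j ^ 2)

/-- ℓ1 norm of a vector. -/
def l1 {d : ℕ} (x : Fin d → ℝ) : ℝ := ∑ j, |x j|

variable {n L d de : ℕ}

/-- Token scores γ_{il} = y_i v^⊤ x_{il}. -/
def gam (X : Fin n → Fin L → Fin d → ℝ) (y : Fin n → ℝ) (v : Fin d → ℝ)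
    (i : Fin n) (l : Fin L) : ℝ := y i * ∑ j, v j * X i l j

/-- g_i(β) = X_i (β ⊙ z_i) for the diagonal attention model. -/
def gD (X : Fin n → Fin L → Fin d → ℝ) (z : Fin n → Fin d → ℝ) (i : Fin n)
    (β : Fin d → ℝ) (l : Fin L) : ℝ := ∑ j, X i l j * (β j * z i j)

/-- Empirical exponential loss for the diagonal attention model. -/
def lossD (X : Fin n → Fin L → Fin d → ℝ) (z : Fin n → Fin d → ℝ)
    (y : Fin n → ℝ) (v : Fin d → ℝ) (β : Fin d → ℝ) : ℝ :=
  (1 / (n : ℝ)) * ∑ i, Real.exp (-(∑ l, gam X y v i l * S (gD X z i β) l))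

/-- Constraint vectors B_{il} = z_i ⊙ (x_{i,opt(i)} − x_{il}). -/
def Bv (X : Fin n → Fin L → Fin d → ℝ) (z : Fin n → Fin d → ℝ)
    (opt : Fin n → Fin L) (i : Fin n) (l : Fin L) (j : Fin d) : ℝ :=
  z i j * (X i (opt i) j - X i l j)

/-- (Σ(u) γ)_l where Σ(u) = Diag(S(u)) − S(u) S(u)^⊤. -/
def SigMul {L : ℕ} (u γv : Fin L → ℝ) (l : Fin L) : ℝ :=
  S u l * γv l - S u l * ∑ j, S u j * γv j

/-- j-th component of the gradient (partial derivative) of f at x. -/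
def pD {d : ℕ} (f : (Fin d → ℝ) → ℝ) (x : Fin d → ℝ) (j : Fin d) : ℝ :=
  fderiv ℝ f x (Pi.single j 1)

/-- Assumption A1. -/
def A1 (X : Fin n → Fin L → Fin d → ℝ) (y : Fin n → ℝ) (v : Fin d → ℝ)
    (opt : Fin n → Fin L) (nopt : Fin n → ℝ) : Prop :=
  ∀ i : Fin n, ∀ l : Fin L, l ≠ opt i →
    gam X y v i l < gam X y v i (opt i) ∧ gam X y v i l = nopt i

/-- Feasibility for the ℓ1-SVM. -/
def Feas (X : Fin n → Fin L → Fin d → ℝ) (z : Fin n → Fin d → ℝ)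
    (opt : Fin n → Fin L) (βf : Fin d → ℝ) : Prop :=
  ∀ i : Fin n, ∀ l : Fin L, l ≠ opt i → 1 ≤ ∑ j, βf j * Bv X z opt i l j

/-- Reparametrized gradient flow on (w₊, w₋). -/
def Flow (X : Fin n → Fin L → Fin d → ℝ) (z : Fin n → Fin d → ℝ)
    (y : Fin n → ℝ) (v : Fin d → ℝ) (wp wm : ℝ → Fin d → ℝ) : Prop :=
  ∀ t : ℝ, 0 ≤ t → ∀ j : Fin d,
    HasDerivAt (fun s => wp s j)
      (-(pD (fun u => lossD X z y v (fun k => (u k ^ 2 - wm t k ^ 2) / 2)) (wp t) j)) t ∧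
    HasDerivAt (fun s => wm s j)
      (-(pD (fun u => lossD X z y v (fun k => (wp t k ^ 2 - u k ^ 2) / 2)) (wm t) j)) t

/-- β(t) = (w₊(t)^{⊙2} − w₋(t)^{⊙2})/2. -/
def bCurve (wp wm : ℝ → Fin d → ℝ) (t : ℝ) (j : Fin d) : ℝ :=
  (wp t j ^ 2 - wm t j ^ 2) / 2

/-- Assumption A2 (initial loss bound). -/
def A2 (X : Fin n → Fin L → Fin d → ℝ) (z : Fin n → Fin d → ℝ)
    (y : Fin n → ℝ) (v : Fin d → ℝ) (opt : Fin n → Fin L) (nopt : Fin n → ℝ)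
    (β0 : Fin d → ℝ) : Prop :=
  ∀ jj : Fin n, lossD X z y v β0 ≤
    (Real.exp (-(nopt jj)) +
      ∑ i ∈ Finset.univ.erase jj, Real.exp (-(gam X y v i (opt i)))) / (n : ℝ)

/-- Margin μ(β) = min_{i, l ≠ opt(i)} β^⊤ B_{il}. -/
def margin (X : Fin n → Fin L → Fin d → ℝ) (z : Fin n → Fin d → ℝ)
    (opt : Fin n → Fin L) (β : Fin d → ℝ) : ℝ :=
  sInf {m : ℝ | ∃ i : Fin n, ∃ l : Fin L, l ≠ opt i ∧ m = ∑ j, β j * Bv X z opt i l j}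

/-- φ_{il}(t). -/
def phi (X : Fin n → Fin L → Fin d → ℝ) (z : Fin n → Fin d → ℝ)
    (y : Fin n → ℝ) (v : Fin d → ℝ) (β : ℝ → Fin d → ℝ) (i : Fin n) (l : Fin L)
    (t : ℝ) : ℝ :=
  -(2 / (n : ℝ)) * ∫ τ in (0:ℝ)..t,
    Real.exp (-(∑ l', gam X y v i l' * S (gD X z i (β τ)) l')) *
      SigMul (gD X z i (β τ)) (gam X y v i) l

/-- Dual variables λ_{il}(t) = φ_{il}(t) / ln μ(β(t)). -/
def lam (X : Fin n → Fin L → Fin d → ℝ) (z : Fin n → Fin d → ℝ)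
    (y : Fin n → ℝ) (v : Fin d → ℝ) (opt : Fin n → Fin L) (β : ℝ → Fin d → ℝ)
    (i : Fin n) (l : Fin L) (t : ℝ) : ℝ :=
  (1 / Real.log (margin X z opt (β t))) * phi X z y v β i l t

/-- g_i(K,Q) = X_i K Q^⊤ z_i for the full attention model. -/
def gM (X : Fin n → Fin L → Fin d → ℝ) (z : Fin n → Fin d → ℝ) (i : Fin n)
    (K Q : Fin d → Fin de → ℝ) (l : Fin L) : ℝ :=
  ∑ a, ∑ b, ∑ c, X i l a * K a b * Q c b * z i c

/-- Empirical exponential loss for the full attention model. -/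
def lossM (X : Fin n → Fin L → Fin d → ℝ) (z : Fin n → Fin d → ℝ)
    (y : Fin n → ℝ) (v : Fin d → ℝ) (K Q : Fin d → Fin de → ℝ) : ℝ :=
  (1 / (n : ℝ)) * ∑ i, Real.exp (-(∑ l, gam X y v i l * S (gM X z i K Q) l))

/-- Partial derivative of f with respect to the (a,b) entry of a matrix. -/
def pDM {d de : ℕ} (f : (Fin d → Fin de → ℝ) → ℝ) (M : Fin d → Fin de → ℝ)
    (a : Fin d) (b : Fin de) : ℝ :=
  fderiv ℝ f M (Pi.single a (Pi.single b 1))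

/-- Gradient flow on the key and query matrices. -/
def MFlow (X : Fin n → Fin L → Fin d → ℝ) (z : Fin n → Fin d → ℝ)
    (y : Fin n → ℝ) (v : Fin d → ℝ) (K Q : ℝ → Fin d → Fin de → ℝ) : Prop :=
  ∀ t : ℝ, 0 ≤ t → ∀ (a : Fin d) (b : Fin de),
    HasDerivAt (fun s => K s a b) (-(pDM (fun M => lossM X z y v M (Q t)) (K t) a b)) t ∧
    HasDerivAt (fun s => Q s a b) (-(pDM (fun M => lossM X z y v (K t) M) (Q t) a b)) t

/-- A rectangular matrix is diagonal: zero off the main diagonal. -/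
def RectDiag {d de : ℕ} (M : Fin d → Fin de → ℝ) : Prop :=
  ∀ (a : Fin d) (b : Fin de), (a : ℕ) ≠ (b : ℕ) → M a b = 0

/-- Orthogonality: U^⊤ U = 1. -/
def Orth {d : ℕ} (U : Fin d → Fin d → ℝ) : Prop :=
  ∀ j j' : Fin d, ∑ a, U a j * U a j' = (if j = j' then (1:ℝ) else 0)

/-- Assumption B1, with the pairing of non-optimal tokens given by the involution σ. -/
def B1 (X : Fin n → Fin L → Fin d → ℝ) (z : Fin n → Fin d → ℝ)
    (opt : Fin n → Fin L) (σ : Fin n → Fin L → Fin L) : Prop :=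
  (∀ i j : Fin n, i ≠ j →
    (∑ a, X i (opt i) a * X j (opt j) a = 0) ∧ (∑ a, z i a * z j a = 0)) ∧
  (∀ i, |∑ a, X i (opt i) a * z i a| = l2 (X i (opt i)) * l2 (z i)) ∧
  (∀ i, ∀ l, l ≠ opt i → σ i l ≠ opt i ∧ σ i l ≠ l ∧ σ i (σ i l) = l ∧
    ∃ c : ℝ, -1 ≤ c ∧ c < 1 ∧
      (∑ a, X i (opt i) a * (X i l a - X i (σ i l) a)) = 0 ∧
      (∀ a, X i l a + X i (σ i l) a = 2 * c * X i (opt i) a))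

/-- Rotated constraint vectors B̃_{il}. -/
def Btil (X : Fin n → Fin L → Fin d → ℝ) (z : Fin n → Fin d → ℝ)
    (opt : Fin n → Fin L) (pim : Fin n → Fin d) (i : Fin n) (l : Fin L) (j : Fin d) : ℝ :=
  Real.sign (∑ a, X i (opt i) a * z i a) * (∑ a, (X i (opt i) a - X i l a) * z i a) *
    (if j = pim i then 1 else 0)

/-- Margin with respect to the rotated constraints. -/
def marginB (X : Fin n → Fin L → Fin d → ℝ) (z : Fin n → Fin d → ℝ)
    (opt : Fin n → Fin L) (pim : Fin n → Fin d) (β : Fin d → ℝ) : ℝ :=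
  sInf {m : ℝ | ∃ i : Fin n, ∃ l : Fin L, l ≠ opt i ∧ m = ∑ j, β j * Btil X z opt pim i l j}

/-- Margin for a combined attention weight matrix. -/
def marginM (X : Fin n → Fin L → Fin d → ℝ) (z : Fin n → Fin d → ℝ)
    (opt : Fin n → Fin L) (W : Fin d → Fin d → ℝ) : ℝ :=
  sInf {m : ℝ | ∃ i : Fin n, ∃ l : Fin L, l ≠ opt i ∧
    m = ∑ a, ∑ c, (X i (opt i) a - X i l a) * W a c * z i c}

/-- Nuclear norm ‖W‖_* = trace((W^⊤W)^{1/2}). -/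
def nuclear {d : ℕ} (W : Matrix (Fin d) (Fin d) ℝ) : ℝ :=
  ((Matrix.posSemidef_conjTranspose_mul_self W).1.eigenvectorUnitary.1 *
    Matrix.diagonal ((RCLike.ofReal : ℝ → ℝ) ∘ (fun x : ℝ => Real.sqrt x) ∘
      (Matrix.posSemidef_conjTranspose_mul_self W).1.eigenvalues) *
    (star (Matrix.posSemidef_conjTranspose_mul_self W).1.eigenvectorUnitary :
      Matrix (Fin d) (Fin d) ℝ)).trace

end AttnGF

namespace AttnGF

lemma l2_pos' {d : ℕ} {x : Fin d → ℝ} (hx : x ≠ 0) : 0 < l2 x := by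
  obtain ⟨a, ha⟩ := Function.ne_iff.mp hx
  rw [l2]
  apply Real.sqrt_pos.mpr
  apply Finset.sum_pos' (fun j _ => sq_nonneg _)
  have ha' : x a ≠ 0 := ha
  exact ⟨a, Finset.mem_univ a, by positivity⟩

lemma cs_eq' {d : ℕ} {x zz : Fin d → ℝ} (hx : x ≠ 0) (hz : zz ≠ 0)
    (h : |∑ a, x a * zz a| = l2 x * l2 zz) : ∃ r : ℝ, ∀ a, zz a = r * x a := by
  let x' : EuclideanSpace ℝ (Fin d) := WithLp.toLp 2 x
  let z' : EuclideanSpace ℝ (Fin d) := WithLp.toLp 2 zz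
  have hx' : x' ≠ 0 := fun h0 => hx (by simpa [x'] using congrArg WithLp.ofLp h0)
  have hz' : z' ≠ 0 := fun h0 => hz (by simpa [z'] using congrArg WithLp.ofLp h0)
  have hinner : (inner ℝ x' z' : ℝ) = ∑ a, x a * zz a := by
    simp [PiLp.inner_apply, RCLike.inner_apply, x', z', mul_comm]
  have hnx : ‖x'‖ = l2 x := by
    rw [EuclideanSpace.norm_eq, l2]
    congr 1
    exact Finset.sum_congr rfl fun a _ => by rw [Real.norm_eq_abs, sq_abs]
  have hnz : ‖z'‖ = l2 zz := by
    rw [EuclideanSpace.norm_eq, l2]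
    congr 1
    exact Finset.sum_congr rfl fun a _ => by rw [Real.norm_eq_abs, sq_abs]
  have h' : ‖(inner ℝ x' z' : ℝ)‖ = ‖x'‖ * ‖z'‖ := by
    rw [hinner, hnx, hnz, Real.norm_eq_abs]; exact h
  obtain ⟨r, hr0, hzr⟩ := (norm_inner_eq_norm_iff hx' hz').mp h'
  exact ⟨r, fun a => by have := congrArg (fun v : EuclideanSpace ℝ (Fin d) => v a) hzr; simpa [x', z'] using this⟩

end AttnGF

namespace AttnGF

/-- equivalence between the rotated ℓ1-SVM constraints on β and the
attention-SVM constraints on W = U_K Diag(β) U_Q^⊤. -/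
theorem statement19 {n L d : ℕ}
    (X : Fin n → Fin L → Fin d → ℝ) (z : Fin n → Fin d → ℝ)
    (opt : Fin n → Fin L)
    (σ : Fin n → Fin L → Fin L) (hB1 : B1 X z opt σ)
    (hx0 : ∀ i : Fin n, X i (opt i) ≠ 0) (hz0 : ∀ i : Fin n, z i ≠ 0)
    (UK UQ : Fin d → Fin d → ℝ) (hUK : Orth UK) (hUQ : Orth UQ)
    (pim : Fin n → Fin d) (hpim : Function.Injective pim)
    (hcolK : ∀ (i : Fin n) (a : Fin d),
      X i (opt i) a / l2 (X i (opt i)) = UK a (pim i))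
    (hcolQ : ∀ (i : Fin n) (a : Fin d),
      z i a / l2 (z i) = UQ a (pim i)) :
    ∀ β : Fin d → ℝ,
      (∀ i : Fin n, ∀ l : Fin L, l ≠ opt i →
        (∑ j, β j * Btil X z opt pim i l j) =
          ∑ a, ∑ c, (X i (opt i) a - X i l a) * (∑ j, UK a j * β j * UQ c j) * z i c) ∧
      ((∀ i : Fin n, ∀ l : Fin L, l ≠ opt i →
          1 ≤ ∑ j, β j * Btil X z opt pim i l j) ↔
        (∀ i : Fin n, ∀ l : Fin L, l ≠ opt i →
          1 ≤ ∑ a, ∑ c, (X i (opt i) a - X i l a) * (∑ j, UK a j * β j * UQ c j) * z i c)) := by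
  intro β
  have key : ∀ i : Fin n, ∀ l : Fin L, l ≠ opt i →
      (∑ j, β j * Btil X z opt pim i l j) =
        ∑ a, ∑ c, (X i (opt i) a - X i l a) * (∑ j, UK a j * β j * UQ c j) * z i c := by
    intro i l hl
    have hlx : 0 < l2 (X i (opt i)) := l2_pos' (hx0 i)
    have hlz : 0 < l2 (z i) := l2_pos' (hz0 i)
    obtain ⟨r, hr⟩ := cs_eq' (hx0 i) (hz0 i) (hB1.2.1 i)
    set lx := l2 (X i (opt i)) with hlxdef
    have hlxne : lx ≠ 0 := hlx.ne'
    set D := ∑ a, (X i (opt i) a - X i l a) * X i (opt i) a with hDdef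
    have hsq : ∑ a, X i (opt i) a ^ 2 = lx ^ 2 := by
      rw [hlxdef, l2, Real.sq_sqrt]; positivity
    have hlzr : l2 (z i) = |r| * lx := by
      rw [l2]
      have e : ∀ a, z i a ^ 2 = r ^ 2 * X i (opt i) a ^ 2 := fun a => by rw [hr a]; ring
      rw [Finset.sum_congr rfl (fun a _ => e a), ← Finset.mul_sum, hsq,
        Real.sqrt_mul (sq_nonneg r), Real.sqrt_sq_eq_abs, Real.sqrt_sq hlx.le]
    have hdot : ∑ a, X i (opt i) a * z i a = r * lx ^ 2 := by
      rw [← hsq, Finset.mul_sum]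
      exact Finset.sum_congr rfl fun a _ => by rw [hr a]; ring
    have hs : Real.sign (∑ a, X i (opt i) a * z i a) * r = |r| := by
      rw [hdot]
      rcases lt_trichotomy r 0 with h | h | h
      · rw [Real.sign_of_neg (mul_neg_of_neg_of_pos h (by positivity)), abs_of_neg h]; ring
      · simp [h]
      · rw [Real.sign_of_pos (mul_pos h (by positivity)), abs_of_pos h]; ring
    have hDz : ∑ a, (X i (opt i) a - X i l a) * z i a = r * D := by
      rw [hDdef, Finset.mul_sum]
      exact Finset.sum_congr rfl fun a _ => by rw [hr a]; ring
    have hL : (∑ j, β j * Btil X z opt pim i l j)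
        = β (pim i) * (Real.sign (∑ a, X i (opt i) a * z i a) *
            (∑ a, (X i (opt i) a - X i l a) * z i a)) := by
      rw [Finset.sum_eq_single (pim i)]
      · simp only [Btil, if_pos rfl, if_true, mul_one]
      · intro j _ hj; simp [Btil, hj]
      · intro h; exact absurd (Finset.mem_univ _) h
    have hzc : ∀ c, z i c = l2 (z i) * UQ c (pim i) := fun c => by
      rw [← hcolQ i c]; field_simp
    have step1 : ∀ a, (∑ c, (X i (opt i) a - X i l a) * (∑ j, UK a j * β j * UQ c j) * z i c)
        = (X i (opt i) a - X i l a) * (β (pim i) * UK a (pim i) * l2 (z i)) := by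
      intro a
      have e1 : ∀ c, (X i (opt i) a - X i l a) * (∑ j, UK a j * β j * UQ c j) * z i c
          = ∑ j, (X i (opt i) a - X i l a) * (UK a j * β j) * (UQ c j * z i c) := by
        intro c
        rw [Finset.mul_sum, Finset.sum_mul]
        exact Finset.sum_congr rfl fun j _ => by ring
      rw [Finset.sum_congr rfl (fun c _ => e1 c), Finset.sum_comm]
      have e2 : ∀ j, (∑ c, (X i (opt i) a - X i l a) * (UK a j * β j) * (UQ c j * z i c))
          = (X i (opt i) a - X i l a) * (UK a j * β j) *
              (l2 (z i) * (if j = pim i then 1 else 0)) := by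
        intro j
        rw [← Finset.mul_sum]
        congr 1
        calc ∑ c, UQ c j * z i c = ∑ c, l2 (z i) * (UQ c j * UQ c (pim i)) :=
              Finset.sum_congr rfl fun c _ => by rw [hzc c]; ring
          _ = l2 (z i) * ∑ c, UQ c j * UQ c (pim i) := by rw [Finset.mul_sum]
          _ = l2 (z i) * (if j = pim i then 1 else 0) := by rw [hUQ j (pim i)]
      rw [Finset.sum_congr rfl (fun j _ => e2 j), Finset.sum_eq_single (pim i)]
      · rw [if_pos rfl]; ring
      · intro j _ hj; rw [if_neg hj]; ring
      · intro h; exact absurd (Finset.mem_univ _) h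
    have hR : (∑ a, ∑ c, (X i (opt i) a - X i l a) * (∑ j, UK a j * β j * UQ c j) * z i c)
        = β (pim i) * (D / lx * l2 (z i)) := by
      rw [Finset.sum_congr rfl (fun a _ => step1 a)]
      have e3 : ∀ a, (X i (opt i) a - X i l a) * (β (pim i) * UK a (pim i) * l2 (z i))
          = β (pim i) * l2 (z i) / lx * ((X i (opt i) a - X i l a) * X i (opt i) a) := by
        intro a
        rw [← hcolK i a, ← hlxdef]
        field_simp
      rw [Finset.sum_congr rfl (fun a _ => e3 a), ← Finset.mul_sum, ← hDdef]
      field_simp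
    rw [hL, hR, hDz, hlzr]
    have e4 : D / lx * (|r| * lx) = |r| * D := by field_simp
    rw [e4, ← hs]
    ring
  refine ⟨key, ?_⟩
  constructor
  · intro h i l hl
    rw [← key i l hl]
    exact h i l hl
  · intro h i l hl
    rw [key i l hl]
    exact h i l hl

end AttnGF
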